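/- The scheme-theoretic intersection of the closure of the minimal nilpotent orbit of sl_{n+1}(C) with the strictly upper triangular subalgebra n^+, i.e., the quotient of C[x_{ij} : i < j] by the ideal of two-by-two minors of the generic strictly upper triangular matrix, is a reduced ring. -/

import Mathlib

open MvPolynomial

/-- The strictly-upper-triangular positions of an `(n+1) × (n+1)` matrix. -/
def UpPos (n : ℕ) := {p : Fin (n + 1) × Fin (n + 1) // p.1 < p.2}

/-- The `(i,j)` entry of the generic strictly upper triangular matrix. -/
noncomputable def upEntry (n : ℕ) (i j : Fin (n + 1)) : MvPolynomial (UpPos n) ℂ :=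
  open Classical in if h : i < j then X ⟨(i, j), h⟩ else 0

/-- The ideal generated by the two-by-two minors of the generic strictly upper
triangular matrix. -/
noncomputable def upMinorsIdeal (n : ℕ) : Ideal (MvPolynomial (UpPos n) ℂ) :=
  Ideal.span {f | ∃ i k j l : Fin (n + 1), i < k ∧ j < l ∧
    f = upEntry n i j * upEntry n k l - upEntry n i l * upEntry n k j}

noncomputable abbrev Pn (n : ℕ) := MvPolynomial (Fin (n+1) ⊕ Fin (n+1)) ℂ

noncomputable def phi (n : ℕ) (c : Fin (n+1)) : MvPolynomial (UpPos n) ℂ →ₐ[ℂ] Pn n :=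
  aeval fun p => if p.1.1 ≤ c ∧ c < p.1.2 then X (.inl p.1.1) * X (.inr p.1.2) else 0

theorem phi_upEntry (n : ℕ) (c i j : Fin (n+1)) :
    phi n c (upEntry n i j) = if i ≤ c ∧ c < j then X (.inl i) * X (.inr j) else 0 := by
  unfold upEntry
  split
  · rw [phi]; exact aeval_X _ _
  · rename_i h
    rw [map_zero, eq_comm, if_neg]
    rintro ⟨h1, h2⟩
    exact h (lt_of_le_of_lt h1 h2)

theorem minors_ker (n : ℕ) (c : Fin (n+1)) : upMinorsIdeal n ≤ RingHom.ker (phi n c) := by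
  rw [upMinorsIdeal, Ideal.span_le]
  rintro f ⟨i, k, j, l, hik, hjl, rfl⟩
  simp only [SetLike.mem_coe, RingHom.mem_ker, map_sub, map_mul, phi_upEntry]
  have hiff : ((i ≤ c ∧ c < j) ∧ (k ≤ c ∧ c < l)) ↔ ((i ≤ c ∧ c < l) ∧ (k ≤ c ∧ c < j)) := by
    constructor
    · rintro ⟨⟨h1, h2⟩, h3, h4⟩
      exact ⟨⟨h1, h2.trans hjl⟩, h3, h2⟩
    · rintro ⟨⟨h1, h2⟩, h3, h4⟩
      exact ⟨⟨h1, h4⟩, h3, h4.trans hjl⟩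
  have h2 : X (Sum.inl i) * X (Sum.inr j) * (X (Sum.inl k) * X (Sum.inr l)) =
      X (Sum.inl i) * (X (Sum.inr l) : Pn n) * (X (Sum.inl k) * X (Sum.inr j)) := by ring
  rw [ite_zero_mul_ite_zero, ite_zero_mul_ite_zero]
  simp only [h2, hiff, sub_self]

noncomputable def rc {n : ℕ} (p : UpPos n) : (Fin (n+1) ⊕ Fin (n+1)) →₀ ℕ :=
  Finsupp.single (Sum.inl p.1.1) 1 + Finsupp.single (Sum.inr p.1.2) 1

noncomputable def Dm {n : ℕ} (m : UpPos n →₀ ℕ) : (Fin (n+1) ⊕ Fin (n+1)) →₀ ℕ :=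
  m.sum fun p k => k • rc p

def Std {n : ℕ} (m : UpPos n →₀ ℕ) : Prop :=
  (∀ p ∈ m.support, ∀ q ∈ m.support, p.1.1 < q.1.2) ∧
  (∀ p ∈ m.support, ∀ q ∈ m.support,
    (p.1.1 ≤ q.1.1 ∧ p.1.2 ≤ q.1.2) ∨ (q.1.1 ≤ p.1.1 ∧ q.1.2 ≤ p.1.2))

theorem Dm_add {n : ℕ} (a b : UpPos n →₀ ℕ) : Dm (a + b) = Dm a + Dm b :=
  Finsupp.sum_add_index' (by simp) (by intro p k1 k2; rw [add_smul])

theorem Dm_single {n : ℕ} (p : UpPos n) (k : ℕ) : Dm (Finsupp.single p k) = k • rc p :=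
  Finsupp.sum_single_index (by simp)

theorem phi_monomial_active {n : ℕ} (c : Fin (n+1)) (m : UpPos n →₀ ℕ)
    (h : ∀ p ∈ m.support, p.1.1 ≤ c ∧ c < p.1.2) :
    phi n c (monomial m 1) = monomial (Dm m) 1 := by
  rw [phi, aeval_monomial, map_one, one_mul, Dm, monomial_finsupp_sum_index, map_one, one_mul]
  rw [Finsupp.prod, Finsupp.prod]
  refine Finset.prod_congr rfl fun p hp => ?_
  rw [if_pos (h p hp)]
  have : (X (Sum.inl p.1.1) * X (Sum.inr p.1.2) : Pn n) = monomial (rc p) 1 := by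
    rw [rc, X, X, monomial_mul, mul_one]
  rw [this, monomial_pow, one_pow]

theorem phi_monomial_dead {n : ℕ} (c : Fin (n+1)) (m : UpPos n →₀ ℕ)
    (p : UpPos n) (hp : p ∈ m.support) (h : ¬ (p.1.1 ≤ c ∧ c < p.1.2)) :
    phi n c (monomial m 1) = 0 := by
  rw [phi, aeval_monomial, map_one, one_mul, Finsupp.prod]
  refine Finset.prod_eq_zero hp ?_
  rw [if_neg h, zero_pow (Finsupp.mem_support_iff.mp hp)]

theorem Dm_zero {n : ℕ} : Dm (0 : UpPos n →₀ ℕ) = 0 := Finsupp.sum_zero_index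

theorem deg_eq_zero {n : ℕ} {m : UpPos n →₀ ℕ} (h : m.sum (fun _ k => k) = 0) : m = 0 := by
  ext p
  by_cases hp : p ∈ m.support
  · have := Finset.sum_eq_zero_iff.mp h p hp
    simpa using this
  · simpa using Finsupp.notMem_support_iff.mp hp

theorem rc_apply_inl {n : ℕ} (p : UpPos n) (i : Fin (n+1)) :
    rc p (Sum.inl i) = if p.1.1 = i then 1 else 0 := by
  rw [rc, Finsupp.add_apply, Finsupp.single_apply, Finsupp.single_apply]
  simp

theorem rc_apply_inr {n : ℕ} (p : UpPos n) (j : Fin (n+1)) :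
    rc p (Sum.inr j) = if p.1.2 = j then 1 else 0 := by
  rw [rc, Finsupp.add_apply, Finsupp.single_apply, Finsupp.single_apply]
  simp

theorem Dm_apply {n : ℕ} (m : UpPos n →₀ ℕ) (a : Fin (n+1) ⊕ Fin (n+1)) :
    Dm m a = ∑ p ∈ m.support, m p * rc p a := by
  rw [Dm, Finsupp.sum, Finsupp.finset_sum_apply]
  exact Finset.sum_congr rfl fun p _ => by rw [Finsupp.smul_apply, smul_eq_mul]

theorem mem_row {n : ℕ} {m : UpPos n →₀ ℕ} {p : UpPos n} (hp : p ∈ m.support) :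
    Dm m (Sum.inl p.1.1) ≠ 0 := by
  rw [Dm_apply]
  have h1 : m p * rc p (Sum.inl p.1.1) ≠ 0 := by
    rw [rc_apply_inl, if_pos rfl, mul_one]
    exact Finsupp.mem_support_iff.mp hp
  intro h0
  exact h1 (Finset.sum_eq_zero_iff.mp h0 p hp)

theorem mem_col {n : ℕ} {m : UpPos n →₀ ℕ} {p : UpPos n} (hp : p ∈ m.support) :
    Dm m (Sum.inr p.1.2) ≠ 0 := by
  rw [Dm_apply]
  have h1 : m p * rc p (Sum.inr p.1.2) ≠ 0 := by
    rw [rc_apply_inr, if_pos rfl, mul_one]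
    exact Finsupp.mem_support_iff.mp hp
  intro h0
  exact h1 (Finset.sum_eq_zero_iff.mp h0 p hp)

theorem row_mem {n : ℕ} {m : UpPos n →₀ ℕ} {i : Fin (n+1)} (h : Dm m (Sum.inl i) ≠ 0) :
    ∃ p ∈ m.support, p.1.1 = i := by
  rw [Dm_apply] at h
  obtain ⟨p, hp, hne⟩ := Finset.exists_ne_zero_of_sum_ne_zero h
  refine ⟨p, hp, ?_⟩
  by_contra hne'
  rw [rc_apply_inl, if_neg hne', mul_zero] at hne
  exact hne rfl

theorem col_mem {n : ℕ} {m : UpPos n →₀ ℕ} {j : Fin (n+1)} (h : Dm m (Sum.inr j) ≠ 0) :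
    ∃ p ∈ m.support, p.1.2 = j := by
  rw [Dm_apply] at h
  obtain ⟨p, hp, hne⟩ := Finset.exists_ne_zero_of_sum_ne_zero h
  refine ⟨p, hp, ?_⟩
  by_contra hne'
  rw [rc_apply_inr, if_neg hne', mul_zero] at hne
  exact hne rfl

theorem Dm_eq_zero {n : ℕ} {m : UpPos n →₀ ℕ} (h : Dm m = 0) : m = 0 := by
  by_contra hm
  obtain ⟨p, hp⟩ := Finsupp.support_nonempty_iff.mpr hm
  exact mem_row hp (by rw [h]; rfl)

theorem std_min {n : ℕ} {m : UpPos n →₀ ℕ} (hstd : Std m) (hm : m ≠ 0) :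
    ∃ p0 ∈ m.support, ∀ p ∈ m.support, p0.1.1 ≤ p.1.1 ∧ p0.1.2 ≤ p.1.2 := by
  obtain ⟨p0, hp0, hmin⟩ := Finset.exists_min_image m.support
    (fun p => (n + 2) * (p.1.1 : ℕ) + (p.1.2 : ℕ)) (Finsupp.support_nonempty_iff.mpr hm)
  refine ⟨p0, hp0, fun p hp => ?_⟩
  rcases hstd.2 p0 hp0 p hp with h | h
  · exact h
  · have hv1 : (p.1.1 : ℕ) ≤ (p0.1.1 : ℕ) := h.1
    have hv2 : (p.1.2 : ℕ) ≤ (p0.1.2 : ℕ) := h.2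
    have hA : (n + 2) * (p.1.1 : ℕ) ≤ (n + 2) * (p0.1.1 : ℕ) := Nat.mul_le_mul_left _ hv1
    have hmin' := hmin p hp
    have h1 : (n + 2) * (p.1.1 : ℕ) = (n + 2) * (p0.1.1 : ℕ) := by omega
    have h2 : (p.1.2 : ℕ) = (p0.1.2 : ℕ) := by omega
    have h3 : (p.1.1 : ℕ) = (p0.1.1 : ℕ) := Nat.eq_of_mul_eq_mul_left (by omega) h1
    exact ⟨le_of_eq (Fin.ext h3.symm), le_of_eq (Fin.ext h2.symm)⟩

theorem std_mono {n : ℕ} {a b : UpPos n →₀ ℕ} (h : a.support ⊆ b.support) (hb : Std b) :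
    Std a :=
  ⟨fun p hp q hq => hb.1 p (h hp) q (h hq), fun p hp q hq => hb.2 p (h hp) q (h hq)⟩

theorem sub_single_add {n : ℕ} {m : UpPos n →₀ ℕ} {p : UpPos n} (hp : p ∈ m.support) :
    (m - Finsupp.single p 1) + Finsupp.single p 1 = m := by
  classical
  have hmp := Finsupp.mem_support_iff.mp hp
  ext q
  rw [Finsupp.add_apply, Finsupp.tsub_apply]
  rcases eq_or_ne q p with rfl | hq
  · rw [Finsupp.single_apply, if_pos rfl]; omega
  · rw [Finsupp.single_apply, if_neg (fun hh => hq hh.symm)]; omega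

theorem sub_single_support {n : ℕ} (m : UpPos n →₀ ℕ) (p : UpPos n) :
    (m - Finsupp.single p 1).support ⊆ m.support := by
  intro q hq
  rw [Finsupp.mem_support_iff] at hq ⊢
  rw [Finsupp.tsub_apply] at hq
  omega

theorem deg_sub_single {n : ℕ} {m : UpPos n →₀ ℕ} {p : UpPos n} (hp : p ∈ m.support) :
    (m - Finsupp.single p 1).sum (fun _ k => k) + 1 = m.sum (fun _ k => k) := by
  conv_rhs => rw [← sub_single_add hp]
  rw [Finsupp.sum_add_index' (fun _ => rfl) (fun _ _ _ => rfl), Finsupp.sum_single_index rfl]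

theorem std_inj {n : ℕ} : ∀ (N : ℕ) (s t : UpPos n →₀ ℕ),
    s.sum (fun _ k => k) + t.sum (fun _ k => k) ≤ N →
    Std s → Std t → Dm s = Dm t → s = t := by
  intro N
  induction N with
  | zero =>
    intro s t hdeg _ _ _
    have hs : s = 0 := deg_eq_zero (by omega)
    have ht : t = 0 := deg_eq_zero (by omega)
    rw [hs, ht]
  | succ N ih =>
    intro s t hdeg hs ht hD
    rcases eq_or_ne s 0 with rfl | hs0
    · have h0 : Dm t = 0 := by rw [← hD, Dm_zero]
      rw [Dm_eq_zero h0]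
    have ht0 : t ≠ 0 := by
      rintro rfl
      rw [Dm_zero] at hD
      exact hs0 (Dm_eq_zero hD)
    obtain ⟨p0, hp0, hpmin⟩ := std_min hs hs0
    obtain ⟨q0, hq0, hqmin⟩ := std_min ht ht0
    have hpq : p0 = q0 := by
      have h1 : p0.1.1 ≤ q0.1.1 := by
        obtain ⟨p, hp, hpe⟩ := row_mem (m := s) (by rw [hD]; exact mem_row hq0)
        exact hpe ▸ (hpmin p hp).1
      have h2 : q0.1.1 ≤ p0.1.1 := by
        obtain ⟨p, hp, hpe⟩ := row_mem (m := t) (by rw [← hD]; exact mem_row hp0)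
        exact hpe ▸ (hqmin p hp).1
      have h3 : p0.1.2 ≤ q0.1.2 := by
        obtain ⟨p, hp, hpe⟩ := col_mem (m := s) (by rw [hD]; exact mem_col hq0)
        exact hpe ▸ (hpmin p hp).2
      have h4 : q0.1.2 ≤ p0.1.2 := by
        obtain ⟨p, hp, hpe⟩ := col_mem (m := t) (by rw [← hD]; exact mem_col hp0)
        exact hpe ▸ (hqmin p hp).2
      exact Subtype.ext (Prod.ext (le_antisymm h1 h2) (le_antisymm h3 h4))
    subst hpq
    set s' := s - Finsupp.single p0 1 with hs'
    set t' := t - Finsupp.single p0 1 with ht'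
    have hDs : Dm s' + Dm (Finsupp.single p0 1) = Dm s := by
      rw [← Dm_add, sub_single_add hp0]
    have hDt : Dm t' + Dm (Finsupp.single p0 1) = Dm t := by
      rw [← Dm_add, sub_single_add hq0]
    have hD' : Dm s' = Dm t' := by
      have : Dm s' + Dm (Finsupp.single p0 1) = Dm t' + Dm (Finsupp.single p0 1) := by
        rw [hDs, hDt, hD]
      exact add_right_cancel this
    have hdeg' : s'.sum (fun _ k => k) + t'.sum (fun _ k => k) ≤ N := by
      have e1 := deg_sub_single hp0
      have e2 := deg_sub_single hq0
      rw [← hs'] at e1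
      rw [← ht'] at e2
      omega
    have := ih s' t' hdeg' (std_mono (sub_single_support s p0) hs)
      (std_mono (sub_single_support t p0) ht) hD'
    calc s = s' + Finsupp.single p0 1 := (sub_single_add hp0).symm
    _ = t' + Finsupp.single p0 1 := by rw [this]
    _ = t := sub_single_add hq0

def wgt {n : ℕ} (p : UpPos n) : ℕ := (n+1)*(n+1) - (p.1.1 : ℕ) * (p.1.2 : ℕ)

def mu {n : ℕ} (m : UpPos n →₀ ℕ) : ℕ := m.sum fun p k => k * wgt p

noncomputable def stdSpan (n : ℕ) : Submodule ℂ (MvPolynomial (UpPos n) ℂ) :=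
  Submodule.span ℂ {f | ∃ s, Std s ∧ f = monomial s 1}

theorem mem_stdSpan {n : ℕ} {s : UpPos n →₀ ℕ} (h : Std s) :
    (monomial s 1 : MvPolynomial (UpPos n) ℂ) ∈ stdSpan n :=
  Submodule.subset_span ⟨s, h, rfl⟩

theorem prod_lt {n : ℕ} (p : UpPos n) : (p.1.1 : ℕ) * (p.1.2 : ℕ) < (n+1)*(n+1) :=
  Nat.mul_lt_mul'' p.1.1.isLt p.1.2.isLt

theorem wgt_pos {n : ℕ} (p : UpPos n) : 0 < wgt p := by
  have := prod_lt p
  rw [wgt]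
  omega

theorem mu_add {n : ℕ} (a b : UpPos n →₀ ℕ) : mu (a + b) = mu a + mu b :=
  Finsupp.sum_add_index' (by simp) (by intro p k1 k2; rw [add_mul])

theorem mu_single {n : ℕ} (p : UpPos n) (k : ℕ) : mu (Finsupp.single p k) = k * wgt p :=
  Finsupp.sum_single_index (by simp)

theorem mu_eq_zero {n : ℕ} {m : UpPos n →₀ ℕ} (h : mu m = 0) : m = 0 := by
  ext p
  by_cases hp : p ∈ m.support
  · have h2 := Finset.sum_eq_zero_iff.mp h p hp
    have h3 := wgt_pos p
    have h4 := Finsupp.mem_support_iff.mp hp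
    exact absurd h2 (by positivity)
  · simpa using Finsupp.notMem_support_iff.mp hp

theorem std_zero {n : ℕ} : Std (0 : UpPos n →₀ ℕ) := by
  constructor <;> intro p hp <;> simp at hp

theorem two_sub_add {n : ℕ} {m : UpPos n →₀ ℕ} {p q : UpPos n} (hpq : p ≠ q)
    (hp : p ∈ m.support) (hq : q ∈ m.support) :
    (m - Finsupp.single p 1 - Finsupp.single q 1) + Finsupp.single p 1 + Finsupp.single q 1
      = m := by
  classical
  have h1 := Finsupp.mem_support_iff.mp hp
  have h2 := Finsupp.mem_support_iff.mp hq
  ext r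
  simp only [Finsupp.add_apply, Finsupp.tsub_apply, Finsupp.single_apply]
  by_cases hpr : p = r
  · subst hpr
    rw [if_pos rfl, if_neg (fun h => hpq h.symm)]
    omega
  · by_cases hqr : q = r
    · subst hqr
      rw [if_neg hpr, if_pos rfl]
      omega
    · rw [if_neg hpr, if_neg hqr]
      omega

theorem monomial_factor {n : ℕ} {m : UpPos n →₀ ℕ} {p q : UpPos n} (hpq : p ≠ q)
    (hp : p ∈ m.support) (hq : q ∈ m.support) :
    (monomial m 1 : MvPolynomial (UpPos n) ℂ)
      = monomial (m - Finsupp.single p 1 - Finsupp.single q 1) 1 * (X p * X q) := by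
  conv_lhs => rw [← two_sub_add hpq hp hq]
  rw [monomial_add_single, monomial_add_single, pow_one, pow_one, mul_assoc]

theorem kill_step {n : ℕ} {m : UpPos n →₀ ℕ} {p q : UpPos n}
    (hp : p ∈ m.support) (hq : q ∈ m.support) (hle : q.1.2 ≤ p.1.1) :
    (monomial m 1 : MvPolynomial (UpPos n) ℂ) ∈ upMinorsIdeal n := by
  have hpq : p ≠ q := by
    rintro rfl
    exact absurd hle (not_le.mpr p.2)
  have hgen : (X q * X p : MvPolynomial (UpPos n) ℂ) ∈ upMinorsIdeal n := by
    apply Ideal.subset_span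
    refine ⟨q.1.1, p.1.1, q.1.2, p.1.2, lt_of_lt_of_le q.2 hle, lt_of_le_of_lt hle p.2, ?_⟩
    simp only [upEntry]
    rw [dif_pos q.2, dif_pos p.2, dif_neg (not_lt.mpr hle), mul_zero, sub_zero]
    rfl
  rw [monomial_factor hpq.symm hq hp]
  exact Ideal.mul_mem_left _ _ hgen

theorem swap_step {n : ℕ} {m : UpPos n →₀ ℕ} {p q : UpPos n}
    (hp : p ∈ m.support) (hq : q ∈ m.support)
    (hA : ∀ a ∈ m.support, ∀ b ∈ m.support, a.1.1 < b.1.2)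
    (h1 : p.1.1 < q.1.1) (h2 : q.1.2 < p.1.2) :
    ∃ m'' : UpPos n →₀ ℕ, mu m'' < mu m ∧
      (monomial m 1 - monomial m'' 1 : MvPolynomial (UpPos n) ℂ) ∈ upMinorsIdeal n := by
  have hpq : p ≠ q := fun h => absurd (h ▸ h1) (lt_irrefl _)
  have hij : p.1.1 < q.1.2 := hA p hp q hq
  have hkl : q.1.1 < p.1.2 := hA q hq p hp
  set a : UpPos n := ⟨(p.1.1, q.1.2), hij⟩ with ha
  set b : UpPos n := ⟨(q.1.1, p.1.2), hkl⟩ with hb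
  set m' := m - Finsupp.single p 1 - Finsupp.single q 1 with hm'
  refine ⟨m' + Finsupp.single a 1 + Finsupp.single b 1, ?_, ?_⟩
  · have e1 : mu m = mu m' + wgt p + wgt q := by
      conv_lhs => rw [← two_sub_add hpq hp hq]
      rw [mu_add, mu_add, mu_single, mu_single, one_mul, one_mul]
    have e2 : mu (m' + Finsupp.single a 1 + Finsupp.single b 1)
        = mu m' + wgt a + wgt b := by
      rw [mu_add, mu_add, mu_single, mu_single, one_mul, one_mul]
    have key : (p.1.1 : ℕ) * (p.1.2 : ℕ) + (q.1.1 : ℕ) * (q.1.2 : ℕ)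
        < (p.1.1 : ℕ) * (q.1.2 : ℕ) + (q.1.1 : ℕ) * (p.1.2 : ℕ) := by
      have k1 : (p.1.1 : ℕ) < (q.1.1 : ℕ) := h1
      have k2 : (q.1.2 : ℕ) < (p.1.2 : ℕ) := h2
      nlinarith
    have w1 := prod_lt p
    have w2 := prod_lt q
    have w3 : (p.1.1 : ℕ) * (q.1.2 : ℕ) < (n+1)*(n+1) := prod_lt a
    have w4 : (q.1.1 : ℕ) * (p.1.2 : ℕ) < (n+1)*(n+1) := prod_lt b
    have ea : wgt a = (n+1)*(n+1) - (p.1.1 : ℕ) * (q.1.2 : ℕ) := rfl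
    have eb : wgt b = (n+1)*(n+1) - (q.1.1 : ℕ) * (p.1.2 : ℕ) := rfl
    have ep : wgt p = (n+1)*(n+1) - (p.1.1 : ℕ) * (p.1.2 : ℕ) := rfl
    have eq' : wgt q = (n+1)*(n+1) - (q.1.1 : ℕ) * (q.1.2 : ℕ) := rfl
    rw [ea, eb] at e2
    rw [ep, eq'] at e1
    omega
  · have hgen : (X a * X b - X p * X q : MvPolynomial (UpPos n) ℂ) ∈ upMinorsIdeal n := by
      apply Ideal.subset_span
      refine ⟨p.1.1, q.1.1, q.1.2, p.1.2, h1, h2, ?_⟩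
      simp only [upEntry]
      rw [dif_pos hij, dif_pos hkl, dif_pos p.2, dif_pos q.2]
      rfl
    have fac1 : (monomial m 1 : MvPolynomial (UpPos n) ℂ) = monomial m' 1 * (X p * X q) :=
      monomial_factor hpq hp hq
    have fac2 : (monomial (m' + Finsupp.single a 1 + Finsupp.single b 1) 1 :
        MvPolynomial (UpPos n) ℂ) = monomial m' 1 * (X a * X b) := by
      rw [monomial_add_single, monomial_add_single, pow_one, pow_one, mul_assoc]
    rw [fac1, fac2]
    have : monomial m' 1 * (X p * X q) - monomial m' 1 * (X a * X b)
        = -(monomial m' (1:ℂ) * (X a * X b - X p * X q)) := by ring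
    rw [this]
    exact neg_mem (Ideal.mul_mem_left _ _ hgen)

theorem straighten {n : ℕ} : ∀ (N : ℕ) (m : UpPos n →₀ ℕ), mu m ≤ N →
    ∃ g ∈ stdSpan n, (monomial m 1 : MvPolynomial (UpPos n) ℂ) - g ∈ upMinorsIdeal n := by
  intro N
  induction N with
  | zero =>
    intro m hm
    have h0 : m = 0 := mu_eq_zero (Nat.le_zero.mp hm)
    subst h0
    exact ⟨monomial 0 1, mem_stdSpan std_zero, by rw [sub_self]; exact zero_mem _⟩
  | succ N ih =>
    intro m hm
    by_cases hstd : Std m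
    · exact ⟨monomial m 1, mem_stdSpan hstd, by rw [sub_self]; exact zero_mem _⟩
    by_cases hA : ∀ p ∈ m.support, ∀ q ∈ m.support, p.1.1 < q.1.2
    · have hB : ¬ ∀ p ∈ m.support, ∀ q ∈ m.support,
          (p.1.1 ≤ q.1.1 ∧ p.1.2 ≤ q.1.2) ∨ (q.1.1 ≤ p.1.1 ∧ q.1.2 ≤ p.1.2) :=
        fun h => hstd ⟨hA, h⟩
      push_neg at hB
      obtain ⟨p, hp, q, hq, hc1, hc2⟩ := hB
      have step : ∃ m'' : UpPos n →₀ ℕ, mu m'' < mu m ∧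
          (monomial m 1 - monomial m'' 1 : MvPolynomial (UpPos n) ℂ) ∈ upMinorsIdeal n := by
        rcases le_or_gt p.1.1 q.1.1 with h | h
        · have hc := hc1 h
          have hlt : p.1.1 < q.1.1 := by
            rcases lt_or_eq_of_le h with h' | h'
            · exact h'
            · exact absurd (hc2 (le_of_eq h'.symm)) (not_lt.mpr (le_of_lt hc))
          exact swap_step hp hq hA hlt hc
        · have hc := hc2 (le_of_lt h)
          exact swap_step hq hp hA h hc
      obtain ⟨m'', hmu, hsub⟩ := step
      obtain ⟨g, hg, hgsub⟩ := ih m'' (by omega)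
      refine ⟨g, hg, ?_⟩
      have := Ideal.add_mem _ hsub hgsub
      rwa [sub_add_sub_cancel] at this
    · push_neg at hA
      obtain ⟨p, hp, q, hq, hle⟩ := hA
      exact ⟨0, zero_mem _, by rw [sub_zero]; exact kill_step hp hq hle⟩

theorem span_inj {n : ℕ} {g : MvPolynomial (UpPos n) ℂ} (hg : g ∈ stdSpan n)
    (h0 : ∀ c, phi n c g = 0) : g = 0 := by
  rw [stdSpan, Submodule.mem_span_set] at hg
  obtain ⟨l, hls, hlg⟩ := hg
  have hl0 : ∀ x ∈ l.support, l x = 0 := by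
    intro x0 hx0
    obtain ⟨s0, hs0, rfl⟩ := hls hx0
    set c0 : Fin (n+1) := s0.support.sup (fun p => p.1.1) with hc0
    have hact : ∀ p ∈ s0.support, p.1.1 ≤ c0 ∧ c0 < p.1.2 := by
      intro p hp
      refine ⟨Finset.le_sup (f := fun p : UpPos n => p.1.1) hp, ?_⟩
      rw [hc0]
      rw [Finset.sup_lt_iff (lt_of_le_of_lt (Fin.zero_le _) p.2)]
      intro q hq
      exact hs0.1 q hq p hp
    have hcoeff : coeff (Dm s0) (phi n c0 g) = l (monomial s0 1) := by
      rw [← hlg, map_finsuppSum, Finsupp.sum, coeff_sum, Finset.sum_eq_single_of_mem _ hx0]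
      · rw [map_smul, coeff_smul, phi_monomial_active c0 s0 hact, coeff_monomial,
          if_pos rfl, smul_eq_mul, mul_one]
      · intro x hx hxne
        obtain ⟨s, hs, rfl⟩ := hls hx
        rw [map_smul, coeff_smul, smul_eq_mul]
        by_cases hact' : ∀ p ∈ s.support, p.1.1 ≤ c0 ∧ c0 < p.1.2
        · rw [phi_monomial_active c0 s hact', coeff_monomial]
          rw [if_neg, mul_zero]
          intro hDeq
          exact hxne (by rw [std_inj (s.sum (fun _ k => k) + s0.sum (fun _ k => k))
            s s0 le_rfl hs hs0 hDeq])
        · push_neg at hact'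
          obtain ⟨p, hp, hcond⟩ := hact'
          rw [phi_monomial_dead c0 s p hp, coeff_zero, mul_zero]
          intro hcc
          rcases hcc with ⟨ha, hb⟩
          exact absurd hb (not_lt.mpr (hcond ha))
    rw [h0 c0, coeff_zero] at hcoeff
    exact hcoeff.symm
  have hlz : l = 0 := by
    ext x
    by_cases hx : x ∈ l.support
    · exact hl0 x hx
    · exact Finsupp.notMem_support_iff.mp hx
  rw [← hlg, hlz, Finsupp.sum_zero_index]

theorem decomp {n : ℕ} (f : MvPolynomial (UpPos n) ℂ) :
    ∃ g ∈ stdSpan n, f - g ∈ upMinorsIdeal n := by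
  have hmem : f ∈ stdSpan n ⊔ (upMinorsIdeal n).restrictScalars ℂ := by
    rw [← support_sum_monomial_coeff f]
    apply Submodule.sum_mem
    intro v _
    have he : (monomial v (coeff v f) : MvPolynomial (UpPos n) ℂ)
        = (coeff v f) • monomial v 1 := by
      rw [smul_monomial, smul_eq_mul, mul_one]
    rw [he]
    apply Submodule.smul_mem
    obtain ⟨g, hg, hsub⟩ := straighten (mu v) v le_rfl
    have : (monomial v 1 : MvPolynomial (UpPos n) ℂ) = g + (monomial v 1 - g) := by ring
    rw [this]
    exact Submodule.add_mem _ (Submodule.mem_sup_left hg) (Submodule.mem_sup_right hsub)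
  rw [Submodule.mem_sup] at hmem
  obtain ⟨g, hg, h, hh, he⟩ := hmem
  refine ⟨g, hg, ?_⟩
  have : f - g = h := by rw [← he]; ring
  rw [this]
  exact hh

theorem stmt15 (n : ℕ) :
    IsReduced (MvPolynomial (UpPos n) ℂ ⧸ upMinorsIdeal n) := by
  rw [← Ideal.isRadical_iff_quotient_reduced]
  intro x hx
  obtain ⟨k, hk⟩ := hx
  have hker : ∀ c, phi n c x = 0 := by
    intro c
    have hxk : phi n c (x ^ k) = 0 := minors_ker n c hk
    rw [map_pow] at hxk
    rcases Nat.eq_zero_or_pos k with rfl | hkpos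
    · simp at hxk
    · exact pow_eq_zero_iff (by omega : k ≠ 0) |>.mp hxk
  obtain ⟨g, hg, hsub⟩ := decomp x
  have hg0 : ∀ c, phi n c g = 0 := by
    intro c
    have h1 : phi n c (x - g) = 0 := minors_ker n c hsub
    rw [map_sub, hker c, zero_sub, neg_eq_zero] at h1
    exact h1
  rw [span_inj hg hg0, sub_zero] at hsub
  exact hsub
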